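/- Let 0 < k < d be positive integers. If n is a sufficiently large multiple of k, then there exists a collection S of n^k many k-element subsets of {0,1,...,kn-1} such that (a) S contains every k-element subset of {0,...,d-1}, and (b) every element of {0,1,...,kn-1} appears in the same number of sets of S. -/

import Mathlib

open Finset

namespace Stmt0Aux

open scoped Classical

open Fin.NatCast Fin.CommRing

variable {M : ℕ} [NeZero M]

/-- Translate a finset by `t`. -/
noncomputable def shift (t : Fin M) (A : Finset (Fin M)) : Finset (Fin M) := A.image (· + t)

lemma mem_shift {t : Fin M} {A : Finset (Fin M)} {x : Fin M} :
    x ∈ shift t A ↔ x - t ∈ A := by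
  simp only [shift, mem_image]
  constructor
  · rintro ⟨y, hy, rfl⟩; simpa using hy
  · intro h; exact ⟨x - t, h, sub_add_cancel x t⟩

lemma shift_shift (s t : Fin M) (A : Finset (Fin M)) :
    shift s (shift t A) = shift (t + s) A := by
  ext x; simp only [mem_shift, sub_sub, add_comm s t]

lemma shift_zero (A : Finset (Fin M)) : shift 0 A = A := by
  ext x; simp [mem_shift]

lemma card_shift (t : Fin M) (A : Finset (Fin M)) : (shift t A).card = A.card :=
  card_image_of_injective _ (add_left_injective t)

lemma shift_left_injective (t : Fin M) : Function.Injective (shift t (M := M)) := by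
  intro A B h
  have := congrArg (shift (-t)) h
  rwa [shift_shift, shift_shift, add_neg_cancel, shift_zero, shift_zero] at this

lemma mem_shift_self (t : Fin M) {A : Finset (Fin M)} {a : Fin M} (ha : a ∈ A) :
    a + t ∈ shift t A := by
  rw [mem_shift, add_sub_cancel_right]; exact ha

/-- The cyclic gap from `a` to the next element of `A`. -/
noncomputable def gap (a : Fin M) (A : Finset (Fin M)) : ℕ :=
  sInf {j : ℕ | 0 < j ∧ a + (j : Fin M) ∈ A}

lemma gapSet_nonempty {a : Fin M} {A : Finset (Fin M)} (ha : a ∈ A) :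
    {j : ℕ | 0 < j ∧ a + (j : Fin M) ∈ A}.Nonempty := by
  refine ⟨M, NeZero.pos M, ?_⟩
  simpa [Fin.natCast_self] using ha

lemma gap_pos_mem {a : Fin M} {A : Finset (Fin M)} (ha : a ∈ A) :
    0 < gap a A ∧ a + ((gap a A : ℕ) : Fin M) ∈ A :=
  Nat.sInf_mem (gapSet_nonempty ha)

lemma gap_le {a : Fin M} {A : Finset (Fin M)} {j : ℕ} (h0 : 0 < j)
    (hj : a + (j : Fin M) ∈ A) : gap a A ≤ j :=
  Nat.sInf_le ⟨h0, hj⟩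

lemma gap_shift (t : Fin M) (a : Fin M) (A : Finset (Fin M)) :
    gap (a + t) (shift t A) = gap a A := by
  unfold gap
  congr 1
  ext j
  simp only [Set.mem_setOf_eq, mem_shift]
  constructor
  · rintro ⟨h0, h⟩
    refine ⟨h0, ?_⟩
    have : a + t + (j : Fin M) - t = a + (j : Fin M) := by abel
    rwa [this] at h
  · rintro ⟨h0, h⟩
    refine ⟨h0, ?_⟩
    have : a + t + (j : Fin M) - t = a + (j : Fin M) := by abel
    rwa [this]

/-- An injective encoding of finsets into ℕ. -/
noncomputable def enc : Finset (Fin M) → ℕ :=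
  fun A => ((Fintype.equivFin (Finset (Fin M))) A : ℕ)

lemma enc_injective : Function.Injective (enc (M := M)) := by
  intro A B h
  have := Fin.val_injective h
  exact (Fintype.equivFin (Finset (Fin M))).injective this

/-- The minimal encoding over the orbit of `A`. -/
noncomputable def orbMin (A : Finset (Fin M)) : ℕ :=
  (Finset.univ.image fun t => enc (shift t A)).min'
    (Finset.Nonempty.image ⟨0, mem_univ 0⟩ _)

lemma orbMin_shift (s : Fin M) (A : Finset (Fin M)) :
    orbMin (shift s A) = orbMin A := by
  unfold orbMin
  congr 1
  ext x
  simp only [mem_image, mem_univ, true_and]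
  constructor
  · rintro ⟨t, rfl⟩
    exact ⟨s + t, by rw [shift_shift]⟩
  · rintro ⟨t, rfl⟩
    exact ⟨t - s, by rw [shift_shift, add_sub_cancel]⟩

lemma orbMin_le (t : Fin M) (A : Finset (Fin M)) : orbMin A ≤ enc (shift t A) :=
  Finset.min'_le _ _ (mem_image_of_mem _ (mem_univ t))

lemma exists_orbMin (A : Finset (Fin M)) : ∃ t, enc (shift t A) = orbMin A := by
  have := Finset.min'_mem (Finset.univ.image fun t => enc (shift t A))
    (Finset.Nonempty.image ⟨0, mem_univ 0⟩ _)
  rw [mem_image] at this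
  obtain ⟨t, -, ht⟩ := this
  exact ⟨t, ht⟩

/-- Cardinality of the orbit closure of a family of canonical aperiodic sets. -/
lemma card_orbitClosure (R : Finset (Finset (Fin M)))
    (hmin : ∀ A ∈ R, enc A = orbMin A)
    (hap : ∀ A ∈ R, ∀ t, shift t A = A → t = 0) :
    ((Finset.univ ×ˢ R).image fun p => shift p.1 p.2).card = M * R.card := by
  rw [Finset.card_image_of_injOn, Finset.card_product, Finset.card_univ, Fintype.card_fin]
  rintro ⟨t, A⟩ hp ⟨t', A'⟩ hp' h
  simp only [Finset.mem_coe, Finset.mem_product, Finset.mem_univ, true_and] at hp hp'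
  simp only at h
  -- A' is a translate of A
  have hA' : A' = shift (t - t') A := by
    have := congrArg (shift (-t')) h
    rwa [shift_shift, shift_shift, add_neg_cancel, shift_zero, eq_comm,
      show t + -t' = t - t' by abel] at this
  have hAA' : A = A' := by
    apply enc_injective
    rw [hmin A hp, hmin A' hp', hA', orbMin_shift]
  subst hAA'
  have h2 : shift (t - t') A = A := by rw [← hA']
  have h3 : t - t' = 0 := hap A hp _ h2
  have htt' : t = t' := by
    have := sub_eq_zero.mp h3
    exact this
  rw [htt']

/-- An invariant family of aperiodic sets has cardinality `M * (number of canonical reps)`. -/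
lemma card_invariant (Q : Finset (Finset (Fin M)))
    (hinv : ∀ t, ∀ A ∈ Q, shift t A ∈ Q)
    (hap : ∀ A ∈ Q, ∀ t, shift t A = A → t = 0) :
    Q.card = M * (Q.filter fun A => enc A = orbMin A).card := by
  set R := Q.filter fun A => enc A = orbMin A with hR
  have hQ : Q = (Finset.univ ×ˢ R).image
      fun p => shift p.1 p.2 := by
    rw [hR]
    ext A
    simp only [mem_image, Finset.mem_product, mem_univ, true_and, mem_filter, Prod.exists]
    constructor
    · intro hA
      obtain ⟨t₀, ht₀⟩ := exists_orbMin A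
      refine ⟨-t₀, shift t₀ A, ⟨hinv _ _ hA, ?_⟩, ?_⟩
      · rw [ht₀, orbMin_shift]
      · rw [shift_shift, add_neg_cancel, shift_zero]
    · rintro ⟨t, B, ⟨hB, -⟩, rfl⟩
      exact hinv _ _ hB
  rw [hQ]
  exact card_orbitClosure R (fun A hA => (mem_filter.mp hA).2)
    (fun A hA t ht => hap A (filter_subset _ _ hA) t ht)

/-- Invariant families have constant degrees. -/
lemma deg_eq (S : Finset (Finset (Fin M)))
    (hinv : ∀ t, ∀ A ∈ S, shift t A ∈ S) (x y : Fin M) :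
    (S.filter fun A => x ∈ A).card = (S.filter fun A => y ∈ A).card := by
  apply Finset.card_bij (fun A _ => shift (y - x) A)
  · intro A hA
    rw [mem_filter] at hA ⊢
    refine ⟨hinv _ _ hA.1, ?_⟩
    rw [mem_shift, show y - (y - x) = x by abel]
    exact hA.2
  · intro A hA B hB h
    exact shift_left_injective _ h
  · intro B hB
    rw [mem_filter] at hB
    refine ⟨shift (x - y) B, ?_, ?_⟩
    · rw [mem_filter]
      refine ⟨hinv _ _ hB.1, ?_⟩
      rw [mem_shift, show x - (x - y) = y by abel]
      exact hB.2
    · rw [shift_shift, show x - y + (y - x) = 0 by abel, shift_zero]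

lemma val_add_nat (a : Fin M) (j : ℕ) (h : a.val + j < M) :
    ((a + (j : Fin M)) : Fin M).val = a.val + j := by
  rw [Fin.val_add, Fin.val_natCast]
  have hj : j < M := by omega
  rw [Nat.mod_eq_of_lt hj, Nat.mod_eq_of_lt h]

lemma add_cast_of_lt {b c : Fin M} (h : b.val < c.val) :
    b + ((c.val - b.val : ℕ) : Fin M) = c := by
  apply Fin.ext
  rw [val_add_nat]
  · omega
  · have := c.isLt; omega

lemma add_wrap (a : Fin M) : a + ((M - a.val : ℕ) : Fin M) = 0 := by
  apply Fin.ext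
  rw [Fin.val_add, Fin.val_natCast, Fin.val_zero]
  have ha : a.val < M := a.isLt
  rcases Nat.eq_zero_or_pos a.val with h | h
  · simp [h, Nat.mod_self]
  · have h2 : M - a.val < M := by omega
    rw [Nat.mod_eq_of_lt h2, show a.val + (M - a.val) = M by omega, Nat.mod_self]

/-- `a` is the unique element of `A` with strictly maximal cyclic gap. -/
def goodWitness (A : Finset (Fin M)) (a : Fin M) : Prop :=
  a ∈ A ∧ ∀ b ∈ A, b ≠ a → gap b A < gap a A

lemma goodWitness_unique {A : Finset (Fin M)} {a a' : Fin M}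
    (h1 : goodWitness A a) (h2 : goodWitness A a') : a = a' := by
  by_contra hne
  have l1 := h1.2 a' h2.1 (fun h => hne h.symm)
  have l2 := h2.2 a h1.1 hne
  omega

lemma goodWitness_shift {A : Finset (Fin M)} {a : Fin M} (t : Fin M)
    (h : goodWitness A a) : goodWitness (shift t A) (a + t) := by
  refine ⟨mem_shift_self t h.1, ?_⟩
  intro b hb hne
  rw [mem_shift] at hb
  have hb2 : b - t ≠ a := by
    intro hc
    apply hne
    rw [← hc, sub_add_cancel]
  have e1 : gap b (shift t A) = gap (b - t) A := by
    conv_lhs => rw [show b = (b - t) + t from (sub_add_cancel b t).symm]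
    exact gap_shift t _ A
  rw [e1, gap_shift]
  exact h.2 _ hb hb2

lemma eq_zero_of_shift_eq {A : Finset (Fin M)} {a : Fin M} (hw : goodWitness A a)
    {t : Fin M} (ht : shift t A = A) : t = 0 := by
  have h1 : goodWitness A (a + t) := by
    have := goodWitness_shift t hw
    rwa [ht] at this
  have : a = a + t := goodWitness_unique hw h1
  have : t = 0 := by
    have := this.symm
    rwa [add_eq_left] at this
  exact this

lemma window_goodWitness {A : Finset (Fin M)} {a : Fin M} (hmem : a ∈ A)
    (hmax : ∀ b ∈ A, b.val ≤ a.val) {h : ℕ}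
    (hval : ∀ b ∈ A, (b : ℕ) ≤ h) (hh : 2 * h < M) : goodWitness A a := by
  refine ⟨hmem, ?_⟩
  intro b hb hne'
  have hba : b.val < a.val := by
    have h1 := hmax b hb
    rcases lt_or_eq_of_le h1 with h2 | h2
    · exact h2
    · exact absurd (Fin.ext h2) hne'
  have hub : gap b A ≤ a.val - b.val := by
    apply gap_le (by omega)
    rw [add_cast_of_lt hba]
    exact hmem
  have hlb : h < gap a A := by
    by_contra hc
    push_neg at hc
    obtain ⟨hg0, hgmem⟩ := gap_pos_mem hmem
    have hva : a.val ≤ h := hval a hmem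
    have hv : ((a + ((gap a A : ℕ) : Fin M)) : Fin M).val = a.val + gap a A := by
      apply val_add_nat; omega
    have hle := hmax _ hgmem
    rw [hv] at hle
    omega
  have : a.val - b.val ≤ h := by
    have := hval a hmem; omega
  omega

lemma window_gap_max {A : Finset (Fin M)} {a : Fin M} (hmem : a ∈ A)
    (hmax : ∀ b ∈ A, b.val ≤ a.val) (h0 : (0 : Fin M) ∈ A) :
    gap a A = M - a.val := by
  have haM : a.val < M := a.isLt
  apply le_antisymm
  · apply gap_le (by omega)
    rw [add_wrap]
    exact h0
  · by_contra hc
    push_neg at hc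
    obtain ⟨hg0, hgmem⟩ := gap_pos_mem hmem
    have hv : ((a + ((gap a A : ℕ) : Fin M)) : Fin M).val = a.val + gap a A := by
      apply val_add_nat; omega
    have hle := hmax _ hgmem
    rw [hv] at hle
    omega

lemma pow_succ_aux (a m : ℕ) : a^m + m * a^(m-1) ≤ (a+1)^m := by
  induction m with
  | zero => simp
  | succ m ih =>
    rcases Nat.eq_zero_or_pos m with hm | hm
    · subst hm; simp [pow_succ]
    · have e : a^(m-1) * a = a^m := by
        rw [← pow_succ]; congr 1; omega
      have h1 : (a^m + m * a^(m-1)) * (a+1) ≤ (a+1)^m * (a+1) :=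
        Nat.mul_le_mul_right _ ih
      rw [← pow_succ] at h1
      refine le_trans ?_ h1
      have e2 : (a^m + m * a^(m-1)) * (a+1)
          = a^m * a + m * (a^(m-1) * a) + a^m + m * a^(m-1) := by ring
      rw [e2, e, ← pow_succ]
      have : (m+1) * a^m = m * a^m + a^m := by ring
      rw [Nat.add_sub_cancel] at *
      nlinarith [Nat.zero_le (m * a^(m-1))]

lemma two_pow_factorial_le : ∀ k, 2 ≤ k → 2^k * (k-1).factorial ≤ k^k := by
  intro k hk
  induction k, hk using Nat.le_induction with
  | base => decide
  | succ k hk ih =>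
    have ih2 := ih
    have e : (k+1-1).factorial = k * (k-1).factorial := by
      have : k = (k-1) + 1 := by omega
      rw [Nat.add_sub_cancel, this, Nat.factorial_succ, ← this]
    have h1 : 2^(k+1) * (k+1-1).factorial = 2 * k * (2^k * (k-1).factorial) := by
      rw [e, pow_succ]; ring
    have h2 : 2 * k * (2^k * (k-1).factorial) ≤ 2 * k * k^k :=
      Nat.mul_le_mul_left _ ih2
    have h3 : k^k + k * k^(k-1) ≤ (k+1)^k := pow_succ_aux k k
    have e2 : k * k^(k-1) = k^k := by
      rw [← pow_succ']; congr 1; omega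
    have h4 : 2 * k^k ≤ (k+1)^k := by omega
    have h5 : (k+1) * (2 * k^k) ≤ (k+1) * (k+1)^k := Nat.mul_le_mul_left _ h4
    rw [← pow_succ'] at h5
    calc 2^(k+1) * (k+1-1).factorial = 2 * k * (2^k * (k-1).factorial) := h1
      _ ≤ 2 * k * k^k := h2
      _ ≤ (k+1) * (2 * k^k) := by nlinarith [Nat.zero_le (k^k)]
      _ ≤ (k+1)^(k+1) := h5

lemma pow_sub_two_aux (n : ℕ) (hn : 2 ≤ n) : ∀ j, n^j ≤ (n-2)^j + 2*j*n^(j-1) := by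
  intro j
  induction j with
  | zero => simp
  | succ j ih =>
    rcases Nat.eq_zero_or_pos j with hj | hj
    · subst hj; simp; omega
    · have e1 : n^(j+1) = n^j * n := pow_succ n j
      have h1 : n^j * n ≤ ((n-2)^j + 2*j*n^(j-1)) * n := Nat.mul_le_mul_right _ ih
      have e2 : ((n-2)^j + 2*j*n^(j-1)) * n = (n-2)^j * n + 2*j*(n^(j-1)*n) := by ring
      have e3 : n^(j-1) * n = n^j := by rw [← pow_succ]; congr 1; omega
      have e4 : (n-2)^j * n = (n-2)^j * (n-2) + 2 * (n-2)^j := by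
        have hn' : n - 2 + 2 = n := by omega
        calc (n-2)^j * n = (n-2)^j * (n-2+2) := by rw [hn']
          _ = (n-2)^j * (n-2) + 2 * (n-2)^j := by ring
      have h5 : (n-2)^j ≤ n^j := Nat.pow_le_pow_left (by omega) j
      have e6 : (n-2)^j * (n-2) = (n-2)^(j+1) := (pow_succ _ _).symm
      calc n^(j+1) = n^j * n := e1
        _ ≤ (n-2)^j * n + 2*j*(n^(j-1)*n) := by rw [← e2]; exact h1
        _ = (n-2)^(j+1) + 2 * (n-2)^j + 2*j*n^j := by rw [e4, e3, e6]
        _ ≤ (n-2)^(j+1) + 2 * n^j + 2*j*n^j := by omega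
        _ = (n-2)^(j+1) + 2*(j+1)*n^j := by ring

lemma pow_le_two_mul_pow_sub (n j : ℕ) (hj : 4*j ≤ n) (hn : 2 ≤ n) :
    n^j ≤ 2 * (n-2)^j := by
  rcases Nat.eq_zero_or_pos j with h0 | h0
  · subst h0; simp
  · have h1 := pow_sub_two_aux n hn j
    have h2 : 2*(2*j*n^(j-1)) ≤ n^j := by
      have e : 2*(2*j*n^(j-1)) = (4*j) * n^(j-1) := by ring
      have e2 : n^j = n * n^(j-1) := by
        rw [← pow_succ']; congr 1; omega
      rw [e, e2]
      exact Nat.mul_le_mul_right _ hj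
    omega

lemma count_ineq (k n : ℕ) (hk : 2 ≤ k) (hn : 4*k ≤ n) :
    n^k ≤ (k*n) * (((k*n)/2 - 1).choose (k-1)) := by
  obtain ⟨j, rfl⟩ : ∃ j, k = j + 1 := ⟨k-1, by omega⟩
  have hj : 1 ≤ j := by omega
  have hn2 : 2 ≤ n := by omega
  rw [Nat.add_sub_cancel]
  set u := ((j+1)*n)/2 with hu
  have hmod := Nat.div_add_mod ((j+1)*n) 2
  have hmlt : ((j+1)*n) % 2 < 2 := Nat.mod_lt _ (by omega)
  have h8 : 8*(j+1) ≤ (j+1)*n := by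
    calc 8*(j+1) = (j+1)*8 := by ring
      _ ≤ (j+1)*n := Nat.mul_le_mul_left _ (by omega)
  have hu2 : j + 2 ≤ u := by omega
  set a := u - j with ha
  have esub : (j+1)*(n-2) = (j+1)*n - 2*(j+1) := by
    rw [Nat.mul_sub]; ring_nf
  have h2a : (j+1)*(n-2) + 1 ≤ 2*a := by omega
  have hd : a ^ j ≤ (u-1).descFactorial j := by
    have h := Nat.pow_sub_le_descFactorial (u-1) j
    have e : u - 1 + 1 - j = a := by omega
    rwa [e] at h
  have hdf : (u-1).descFactorial j = j.factorial * ((u-1).choose j) :=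
    Nat.descFactorial_eq_factorial_mul_choose _ _
  have hfac : 2^(j+1) * j.factorial ≤ (j+1)^(j+1) := by
    have := two_pow_factorial_le (j+1) (by omega)
    rwa [Nat.add_sub_cancel] at this
  -- main chain multiplied by 2^(j+1)
  have key : 2^(j+1) * (j.factorial * n^(j+1)) ≤ 2^(j+1) * (((j+1)*n) * a^j) := by
    have c1 : 2^(j+1) * (j.factorial * n^(j+1)) ≤ (j+1)^(j+1) * n^(j+1) := by
      rw [← mul_assoc]
      exact Nat.mul_le_mul_right _ hfac
    have c2 : (j+1)^(j+1) * n^(j+1) = ((j+1)*n) * ((j+1)^j * n^j) := by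
      rw [← mul_pow, ← mul_pow, pow_succ]
      ring
    have c3 : n^j ≤ 2 * (n-2)^j := pow_le_two_mul_pow_sub n j (by omega) hn2
    have c4 : (j+1)^j * n^j ≤ 2 * ((j+1)*(n-2))^j := by
      calc (j+1)^j * n^j ≤ (j+1)^j * (2 * (n-2)^j) := Nat.mul_le_mul_left _ c3
        _ = 2 * ((j+1)*(n-2))^j := by rw [mul_pow]; ring
    have c5 : ((j+1)*(n-2))^j ≤ (2*a)^j := Nat.pow_le_pow_left (by omega) j
    calc 2^(j+1) * (j.factorial * n^(j+1)) ≤ (j+1)^(j+1) * n^(j+1) := c1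
      _ = ((j+1)*n) * ((j+1)^j * n^j) := c2
      _ ≤ ((j+1)*n) * (2 * ((j+1)*(n-2))^j) := Nat.mul_le_mul_left _ c4
      _ ≤ ((j+1)*n) * (2 * (2*a)^j) := by
          refine Nat.mul_le_mul_left _ (Nat.mul_le_mul_left _ c5)
      _ = 2^(j+1) * (((j+1)*n) * a^j) := by
          rw [mul_pow, pow_succ]
          ring
  have key2 : j.factorial * n^(j+1) ≤ ((j+1)*n) * a^j :=
    Nat.le_of_mul_le_mul_left key (by positivity)
  have key3 : j.factorial * n^(j+1) ≤ j.factorial * (((j+1)*n) * ((u-1).choose j)) := by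
    calc j.factorial * n^(j+1) ≤ ((j+1)*n) * a^j := key2
      _ ≤ ((j+1)*n) * ((u-1).descFactorial j) := Nat.mul_le_mul_left _ hd
      _ = j.factorial * (((j+1)*n) * ((u-1).choose j)) := by rw [hdf]; ring
  exact Nat.le_of_mul_le_mul_left key3 (Nat.factorial_pos j)

lemma base_recover {B : Finset (Fin M)} {h : ℕ} (h2 : 2 * h < M)
    (h0 : (0 : Fin M) ∈ B) (hval : ∀ b ∈ B, (b : ℕ) ≤ h) (t : Fin M) :
    ∃ a, goodWitness (shift t B) a ∧ a + ((gap a (shift t B) : ℕ) : Fin M) = t := by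
  have hne : B.Nonempty := ⟨0, h0⟩
  have hmax : ∀ b ∈ B, b.val ≤ (B.max' hne).val := fun b hb => Fin.le_def.mp (B.le_max' b hb)
  have hw := window_goodWitness (B.max'_mem hne) hmax hval h2
  have hg := window_gap_max (B.max'_mem hne) hmax h0
  refine ⟨B.max' hne + t, goodWitness_shift t hw, ?_⟩
  have e1 : gap (B.max' hne + t) (shift t B) = gap (B.max' hne) B := gap_shift t _ B
  rw [e1, hg, show B.max' hne + t + ((M - (B.max' hne).val : ℕ) : Fin M)
      = (B.max' hne + ((M - (B.max' hne).val : ℕ) : Fin M)) + t by ring, add_wrap, zero_add]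

lemma main_construction (k d n : ℕ) (hk : 2 ≤ k) (hkd : k < d) (hnd : d + 1 ≤ n)
    (hn4 : 4 * k ≤ n) (hn3 : k * 2 ^ d ≤ n) (hdvd : k ∣ n) :
    ∃ S : Finset (Finset (Fin (k * n))),
      S.card = n ^ k ∧ (∀ A ∈ S, A.card = k) ∧
      (∀ A : Finset (Fin (k * n)), A.card = k → (∀ a ∈ A, (a : ℕ) < d) → A ∈ S) ∧
      (∃ m : ℕ, ∀ x : Fin (k * n), (S.filter (fun A => x ∈ A)).card = m) := by
  have hk0 : 0 < k := by omega
  have hn0 : 0 < n := by omega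
  have hM0 : 0 < k * n := Nat.mul_pos hk0 hn0
  have h2n : 2 * n ≤ k * n := Nat.mul_le_mul_right n hk
  haveI : NeZero (k * n) := ⟨by omega⟩
  classical
  -- the mandatory family D
  set D : Finset (Finset (Fin (k * n))) :=
    univ.filter (fun A => A.card = k ∧ ∀ a ∈ A, (a : ℕ) < d) with hD
  -- the ambient aperiodic family F
  set F : Finset (Finset (Fin (k * n))) :=
    univ.filter (fun A => A.card = k ∧ ∃ a, goodWitness A a) with hF
  have hFinv : ∀ t, ∀ A ∈ F, shift t A ∈ F := by
    intro t A hA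
    simp only [hF, mem_filter, mem_univ, true_and] at hA ⊢
    obtain ⟨hcard, a, ha⟩ := hA
    exact ⟨by rw [card_shift]; exact hcard, a + t, goodWitness_shift t ha⟩
  have hFap : ∀ A ∈ F, ∀ t, shift t A = A → t = 0 := by
    intro A hA t ht
    simp only [hF, mem_filter, mem_univ, true_and] at hA
    obtain ⟨-, a, ha⟩ := hA
    exact eq_zero_of_shift_eq ha ht
  have hFcardk : ∀ A ∈ F, A.card = k := by
    intro A hA
    exact ((mem_filter.mp hA).2).1
  have hDF : D ⊆ F := by
    intro A hA
    simp only [hD, hF, mem_filter, mem_univ, true_and] at hA ⊢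
    obtain ⟨hcard, hlt⟩ := hA
    have hne : A.Nonempty := card_pos.mp (by rw [hcard]; omega)
    refine ⟨hcard, A.max' hne, ?_⟩
    refine window_goodWitness (A.max'_mem hne)
      (fun b hb => Fin.le_def.mp (A.le_max' b hb)) (h := d - 1)
      (fun b hb => by have := hlt b hb; omega) (by omega)
  -- the orbit closure of D
  set O : Finset (Finset (Fin (k * n))) := ((univ ×ˢ D).image fun p => shift p.1 p.2) with hO
  have hDO : D ⊆ O := by
    intro A hA
    rw [hO, mem_image]
    exact ⟨(0, A), mem_product.mpr ⟨mem_univ _, hA⟩, shift_zero A⟩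
  have hOinv : ∀ t, ∀ A ∈ O, shift t A ∈ O := by
    intro t B hB
    rw [hO, mem_image] at hB
    obtain ⟨⟨s, A⟩, hp, rfl⟩ := hB
    rw [shift_shift, hO, mem_image]
    exact ⟨(s + t, A), mem_product.mpr ⟨mem_univ _, (mem_product.mp hp).2⟩, rfl⟩
  have hOF : O ⊆ F := by
    intro B hB
    rw [hO, mem_image] at hB
    obtain ⟨⟨s, A⟩, hp, rfl⟩ := hB
    exact hFinv _ _ (hDF (mem_product.mp hp).2)
  -- counting F from below via window sets
  have hmod2 := Nat.div_add_mod (k * n) 2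
  have hmlt2 : (k * n) % 2 < 2 := Nat.mod_lt _ (by omega)
  set h0 : ℕ := (k * n) / 2 - 1 with hh0
  have hn8 : 8 ≤ k * n := by
    calc (8:ℕ) = 2 * 4 := by norm_num
      _ ≤ 2 * n := by omega
      _ ≤ k * n := h2n
  have hh2 : 2 * h0 < k * n := by omega
  set B0 : Finset (Fin (k * n)) := (Finset.Icc 1 h0).image (fun j : ℕ => (j : Fin (k * n))) with hB0
  have hB0val : ∀ b ∈ B0, 1 ≤ (b : Fin (k * n)).val ∧ (b : Fin (k*n)).val ≤ h0 := by
    intro b hb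
    rw [hB0, mem_image] at hb
    obtain ⟨j, hj, rfl⟩ := hb
    rw [mem_Icc] at hj
    rw [Fin.val_natCast, Nat.mod_eq_of_lt (by omega)]
    omega
  have hB0card : B0.card = h0 := by
    rw [hB0, card_image_of_injOn, Nat.card_Icc]
    · omega
    · intro x hx y hy hxy
      rw [mem_coe, mem_Icc] at hx hy
      have := congrArg Fin.val hxy
      rwa [Fin.val_natCast, Fin.val_natCast, Nat.mod_eq_of_lt (by omega),
        Nat.mod_eq_of_lt (by omega)] at this
  set WB : Finset (Finset (Fin (k * n))) := B0.powersetCard (k - 1) with hWB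
  have hbase : ∀ C ∈ WB, (insert (0 : Fin (k * n)) C).card = k ∧
      (0 : Fin (k * n)) ∉ C ∧ (∀ b ∈ insert (0 : Fin (k * n)) C, (b : ℕ) ≤ h0) := by
    intro C hC
    rw [hWB, mem_powersetCard] at hC
    obtain ⟨hsub, hcard⟩ := hC
    have h0nC : (0 : Fin (k * n)) ∉ C := by
      intro hc
      have := (hB0val _ (hsub hc)).1
      simp at this
    refine ⟨?_, h0nC, ?_⟩
    · rw [card_insert_of_notMem h0nC, hcard]; omega
    · intro b hb
      rcases mem_insert.mp hb with rfl | hb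
      · simp
      · exact (hB0val _ (hsub hb)).2
  set Φ : Fin (k * n) × Finset (Fin (k * n)) → Finset (Fin (k * n)) :=
    fun p => shift p.1 (insert 0 p.2) with hΦ
  have hΦinj : Set.InjOn Φ ((univ ×ˢ WB : Finset (Fin (k*n) × Finset (Fin (k*n)))) : Set _) := by
    rintro ⟨t, C⟩ hp ⟨t', C'⟩ hp' heq
    simp only [mem_coe, mem_product, mem_univ, true_and] at hp hp'
    obtain ⟨hcard, h0nC, hval⟩ := hbase C hp
    obtain ⟨hcard', h0nC', hval'⟩ := hbase C' hp'
    obtain ⟨a, hwa, hta⟩ := base_recover hh2 (mem_insert_self 0 C) hval t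
    obtain ⟨a', hwa', hta'⟩ := base_recover hh2 (mem_insert_self 0 C') hval' t'
    simp only [hΦ] at heq
    rw [heq] at hwa hta
    have haa : a = a' := goodWitness_unique hwa hwa'
    have htt : t = t' := by subst hta; rw [haa]; exact hta'
    have hCC : C = C' := by
      have h1 : insert (0 : Fin (k*n)) C = insert 0 C' := by
        apply shift_left_injective t
        rw [heq, htt]
      have h2 := congrArg (fun s => Finset.erase s (0 : Fin (k*n))) h1
      simpa [Finset.erase_insert h0nC, Finset.erase_insert h0nC'] using h2
    rw [htt, hCC]
  have hWsubF : (univ ×ˢ WB).image Φ ⊆ F := by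
    intro B hB
    rw [mem_image] at hB
    obtain ⟨⟨t, C⟩, hp, rfl⟩ := hB
    obtain ⟨hcard, h0nC, hval⟩ := hbase C (mem_product.mp hp).2
    obtain ⟨a, hwa, -⟩ := base_recover hh2 (mem_insert_self 0 C) hval t
    simp only [hF, mem_filter, mem_univ, true_and, hΦ]
    exact ⟨by rw [card_shift]; exact hcard, a, hwa⟩
  have hWcard : ((univ ×ˢ WB).image Φ).card = (k * n) * Nat.choose h0 (k - 1) := by
    rw [card_image_of_injOn hΦinj, card_product, card_univ, Fintype.card_fin, hWB,
      card_powersetCard, hB0card]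
  have hFcard : n ^ k ≤ F.card := by
    have h1 := count_ineq k n hk hn4
    calc n ^ k ≤ (k * n) * Nat.choose ((k*n)/2 - 1) (k - 1) := h1
      _ = ((univ ×ˢ WB).image Φ).card := by rw [hWcard]
      _ ≤ F.card := card_le_card hWsubF
  -- orbit counting
  have hOcount := card_invariant O hOinv (fun A hA t ht => hFap A (hOF hA) t ht)
  set q : ℕ := (O.filter fun A => enc A = orbMin A).card with hq
  set P : Finset (Finset (Fin (k * n))) := F \ O with hP
  have hPinv : ∀ t, ∀ A ∈ P, shift t A ∈ P := by
    intro t A hA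
    rw [hP, mem_sdiff] at hA ⊢
    refine ⟨hFinv t A hA.1, fun hc => hA.2 ?_⟩
    have := hOinv (-t) _ hc
    rwa [shift_shift, add_neg_cancel, shift_zero] at this
  have hPF : P ⊆ F := sdiff_subset
  have hPcount := card_invariant P hPinv (fun A hA t ht => hFap A (hPF hA) t ht)
  set RP : Finset (Finset (Fin (k * n))) := P.filter (fun A => enc A = orbMin A) with hRP
  -- size bounds for O
  have hDle : D.card ≤ 2 ^ d := by
    have hsub : D ⊆ ((Finset.range d).image (fun j : ℕ => (j : Fin (k * n)))).powerset := by
      intro A hA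
      rw [mem_powerset]
      intro a ha
      simp only [hD, mem_filter, mem_univ, true_and] at hA
      have had := hA.2 a ha
      rw [mem_image]
      exact ⟨a.val, mem_range.mpr had, Fin.cast_val_eq_self a⟩
    calc D.card ≤ (((Finset.range d).image (fun j : ℕ => (j : Fin (k*n)))).powerset).card :=
          card_le_card hsub
      _ = 2 ^ (((Finset.range d).image (fun j : ℕ => (j : Fin (k*n))))).card := card_powerset _
      _ ≤ 2 ^ d := Nat.pow_le_pow_right (by omega)
          (le_trans card_image_le (le_of_eq (card_range d)))
  have hOle : O.card ≤ n * n := by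
    calc O.card ≤ (univ ×ˢ D).card := card_image_le
      _ = (k * n) * D.card := by rw [card_product, card_univ, Fintype.card_fin]
      _ ≤ (k * n) * 2 ^ d := Nat.mul_le_mul_left _ hDle
      _ = n * (k * 2 ^ d) := by ring
      _ ≤ n * n := Nat.mul_le_mul_left _ hn3
  have hn2k : n * n ≤ n ^ k := by
    calc n * n = n ^ 2 := (sq n).symm
      _ ≤ n ^ k := Nat.pow_le_pow_right hn0 hk
  have hMdvd : (k * n) ∣ n ^ k := by
    obtain ⟨m, hm⟩ := hdvd
    have h1 : (k * n) ∣ n ^ 2 := ⟨m, by rw [hm]; ring⟩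
    exact dvd_trans h1 (pow_dvd_pow n hk)
  have hOlek : O.card ≤ n ^ k := le_trans hOle hn2k
  set r : ℕ := n ^ k / (k * n) - q with hr
  have hqle : q ≤ n ^ k / (k * n) := by
    have h1 : (k * n) * (n ^ k / (k * n)) = n ^ k := Nat.mul_div_cancel' hMdvd
    have h2 : (k * n) * q ≤ n ^ k := by rw [← hOcount]; exact hOlek
    have h3 : (k * n) * q ≤ (k * n) * (n ^ k / (k * n)) := by rw [h1]; exact h2
    exact Nat.le_of_mul_le_mul_left h3 hM0
  have hqr : (k * n) * q + (k * n) * r = n ^ k := by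
    have h1 : (k * n) * (n ^ k / (k * n)) = n ^ k := Nat.mul_div_cancel' hMdvd
    calc (k*n) * q + (k*n) * r = (k*n) * (q + r) := by ring
      _ = (k*n) * (n ^ k / (k*n)) := by congr 1; omega
      _ = n ^ k := h1
  have hRPr : r ≤ RP.card := by
    have hPc : P.card = F.card - O.card := card_sdiff_of_subset hOF
    have hmul : (k * n) * r ≤ (k * n) * RP.card := by
      rw [← hPcount, hPc]
      omega
    exact Nat.le_of_mul_le_mul_left hmul hM0
  obtain ⟨R0, hR0sub, hR0card⟩ := Finset.exists_subset_card_eq hRPr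
  set S2 : Finset (Finset (Fin (k * n))) := ((univ ×ˢ R0).image fun p => shift p.1 p.2) with hS2
  have hR0P : R0 ⊆ P := le_trans hR0sub (filter_subset _ _)
  have hS2card : S2.card = (k * n) * r := by
    rw [hS2, card_orbitClosure R0 (fun A hA => (mem_filter.mp (hR0sub hA)).2)
      (fun A hA t ht => hFap A (hPF (hR0P hA)) t ht), hR0card]
  set S : Finset (Finset (Fin (k * n))) := O ∪ S2 with hS
  have hdisj : Disjoint O S2 := by
    rw [disjoint_right]
    intro B hB hBO
    rw [hS2, mem_image] at hB
    obtain ⟨⟨s, A⟩, hp, rfl⟩ := hB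
    have hAR : A ∈ R0 := (mem_product.mp hp).2
    have hAP : A ∈ P := hR0P hAR
    have hAO : A ∈ O := by
      have := hOinv (-s) _ hBO
      rwa [shift_shift, add_neg_cancel, shift_zero] at this
    rw [hP, mem_sdiff] at hAP
    exact hAP.2 hAO
  have hScard : S.card = n ^ k := by
    rw [hS, card_union_of_disjoint hdisj, hS2card, hOcount]
    exact hqr
  have hSinv : ∀ t, ∀ A ∈ S, shift t A ∈ S := by
    intro t A hA
    rw [hS, mem_union] at hA ⊢
    rcases hA with h | h
    · exact Or.inl (hOinv t A h)
    · refine Or.inr ?_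
      rw [hS2, mem_image] at h
      obtain ⟨⟨s, B⟩, hp, rfl⟩ := h
      rw [shift_shift, hS2, mem_image]
      exact ⟨(s + t, B), mem_product.mpr ⟨mem_univ _, (mem_product.mp hp).2⟩, rfl⟩
  have hSF : S ⊆ F := by
    rw [hS]
    refine union_subset hOF ?_
    intro B hB
    rw [hS2, mem_image] at hB
    obtain ⟨⟨s, A⟩, hp, rfl⟩ := hB
    exact hFinv s A (hPF (hR0P (mem_product.mp hp).2))
  refine ⟨S, hScard, ?_, ?_, ?_⟩
  · intro A hA
    exact hFcardk A (hSF hA)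
  · intro A hcard hlt
    apply mem_union_left
    apply hDO
    simp only [hD, mem_filter, mem_univ, true_and]
    exact ⟨hcard, hlt⟩
  · exact ⟨(S.filter fun A => (0 : Fin (k * n)) ∈ A).card, fun x => deg_eq S hSinv x 0⟩

end Stmt0Aux

/-- For `0 < k < d`, if `n` is a sufficiently large multiple of `k`, there is a
collection `S` of `n^k` many `k`-element subsets of `{0,...,kn-1}` containing every `k`-element
subset of `{0,...,d-1}`, such that every element appears in the same number of sets of `S`. -/
theorem stmt0 (k d : ℕ) (hk : 0 < k) (hkd : k < d) :
    ∃ N : ℕ, ∀ n : ℕ, N ≤ n → k ∣ n →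
      ∃ S : Finset (Finset (Fin (k * n))),
        S.card = n ^ k ∧
        (∀ A ∈ S, A.card = k) ∧
        (∀ A : Finset (Fin (k * n)), A.card = k → (∀ a ∈ A, (a : ℕ) < d) → A ∈ S) ∧
        (∃ m : ℕ, ∀ x : Fin (k * n), (S.filter (fun A => x ∈ A)).card = m) := by
  classical
  rcases Nat.lt_or_ge k 2 with hk2 | hk2
  · -- the case k = 1
    have hk1 : k = 1 := by omega
    subst hk1
    refine ⟨1, fun n hn hdvd => ?_⟩
    refine ⟨Finset.univ.image (fun x : Fin (1 * n) => ({x} : Finset (Fin (1 * n)))),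
      ?_, ?_, ?_, ?_⟩
    · rw [Finset.card_image_of_injective _ Finset.singleton_injective, Finset.card_univ,
        Fintype.card_fin, one_mul, pow_one]
    · intro A hA
      rw [Finset.mem_image] at hA
      obtain ⟨x, -, rfl⟩ := hA
      simp
    · intro A hcard hlt
      obtain ⟨x, rfl⟩ := Finset.card_eq_one.mp hcard
      exact Finset.mem_image.mpr ⟨x, Finset.mem_univ x, rfl⟩
    · refine ⟨1, fun x => ?_⟩
      have he : ((Finset.univ.image (fun x : Fin (1 * n) => ({x} : Finset (Fin (1 * n))))).filter
          (fun A => x ∈ A)) = {{x}} := by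
        ext B
        simp only [Finset.mem_filter, Finset.mem_image, Finset.mem_univ, true_and,
          Finset.mem_singleton]
        constructor
        · rintro ⟨⟨y, rfl⟩, hx⟩
          rw [Finset.mem_singleton] at hx
          rw [hx]
        · rintro rfl
          exact ⟨⟨x, rfl⟩, Finset.mem_singleton_self x⟩
      rw [he, Finset.card_singleton]
  · -- the case 2 ≤ k
    refine ⟨d + 4 * k + k * 2 ^ d + 2, fun n hn hdvd => ?_⟩
    exact Stmt0Aux.main_construction k d n hk2 hkd (by omega) (by omega) (by omega) hdvd
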